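/- arXiv:1110.5719 — 2 statements merged into one kernel-verified Lean document; each statement's English description precedes it below -/
import Mathlib

section
/- Let (k₁,k₂,k₃,k₄) ∈ ℤ⁴. Then k₁ - k₂ + k₃ - k₄ = 0 and |k₁| - |k₂| + |k₃| - |k₄| = 0 hold if and only if at least one of the following holds: (1) all kⱼ ≥ 0; (2) all kⱼ ≤ 0; (3) k₁ = k₂ and k₃ = k₄; (4) k₁ = k₄ and k₃ = k₂. -/
/-- Resonance lemma for the half-wave equation: for integers with
`k₁ - k₂ + k₃ - k₄ = 0`, the resonance condition `|k₁| - |k₂| + |k₃| - |k₄| = 0`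
holds iff all `kⱼ` are nonnegative, or all are nonpositive, or `k₁ = k₂ ∧ k₃ = k₄`,
or `k₁ = k₄ ∧ k₃ = k₂`. -/
theorem stmt0 (k₁ k₂ k₃ k₄ : ℤ) (h : k₁ - k₂ + k₃ - k₄ = 0) :
    |k₁| - |k₂| + |k₃| - |k₄| = 0 ↔
      ((0 ≤ k₁ ∧ 0 ≤ k₂ ∧ 0 ≤ k₃ ∧ 0 ≤ k₄) ∨
       (k₁ ≤ 0 ∧ k₂ ≤ 0 ∧ k₃ ≤ 0 ∧ k₄ ≤ 0) ∨
       (k₁ = k₂ ∧ k₃ = k₄) ∨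
       (k₁ = k₄ ∧ k₃ = k₂)) := by
  rcases abs_cases k₁ with ⟨h1, _⟩ | ⟨h1, _⟩ <;>
  rcases abs_cases k₂ with ⟨h2, _⟩ | ⟨h2, _⟩ <;>
  rcases abs_cases k₃ with ⟨h3, _⟩ | ⟨h3, _⟩ <;>
  rcases abs_cases k₄ with ⟨h4, _⟩ | ⟨h4, _⟩ <;>
  omega
end

section
/- Let a, b, T > 0 and let M : [0,T] → ℝ≥0 be continuous with M(τ) ≤ a + b·M(τ)³ for all τ ∈ [0,T]. If √(3b)·M(0) < 1 and √(3b)·a < 2/3, then M(τ) ≤ (3/2)·a for all τ ∈ [0,T]. -/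
/-- Bootstrap lemma: if a continuous nonnegative function `M` on `[0,T]` satisfies
`M(τ) ≤ a + b M(τ)³`, with `√(3b)·M(0) < 1` and `√(3b)·a < 2/3`, then `M(τ) ≤ (3/2)a`. -/
theorem stmt1 (a b T : ℝ) (ha : 0 < a) (hb : 0 < b) (hT : 0 < T)
    (M : ℝ → ℝ) (hMcont : ContinuousOn M (Set.Icc 0 T))
    (hMnonneg : ∀ τ ∈ Set.Icc (0:ℝ) T, 0 ≤ M τ)
    (hineq : ∀ τ ∈ Set.Icc (0:ℝ) T, M τ ≤ a + b * M τ ^ 3)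
    (h1 : Real.sqrt (3 * b) * M 0 < 1)
    (h2 : Real.sqrt (3 * b) * a < 2 / 3) :
    ∀ τ ∈ Set.Icc (0:ℝ) T, M τ ≤ 3 / 2 * a := by
  set s := Real.sqrt (3 * b) with hs
  have hspos : 0 < s := Real.sqrt_pos.mpr (by linarith)
  have hssq : s ^ 2 = 3 * b := Real.sq_sqrt (by linarith)
  set c := 1 / s with hc
  have hcpos : 0 < c := by positivity
  have key : ∀ x : ℝ, 0 ≤ x → x ≤ c → x ≤ a + b * x ^ 3 → x ≤ 3 / 2 * a := by
    intro x hx hxc hxi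
    have hsx : s * x ≤ 1 := by
      rw [hc] at hxc
      calc s * x ≤ s * (1 / s) := by nlinarith
        _ = 1 := by field_simp
    have hsx0 : 0 ≤ s * x := mul_nonneg hspos.le hx
    have h3 : (s * x) ^ 2 ≤ 1 := by nlinarith
    have h5 : 3 * b * x ^ 2 ≤ 1 := by nlinarith [mul_pow s x 2]
    have h4 : b * x ^ 3 ≤ x / 3 := by nlinarith [mul_le_mul_of_nonneg_right h5 hx]
    linarith
  have hac : 3 / 2 * a < c := by
    rw [hc, lt_div_iff₀ hspos]
    nlinarith
  have h0T : (0:ℝ) ∈ Set.Icc (0:ℝ) T := ⟨le_refl 0, le_of_lt hT⟩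
  have hM0 : M 0 < c := by
    rw [hc, lt_div_iff₀ hspos]
    nlinarith
  intro τ hτ
  by_contra h
  push_neg at h
  have hMτc : c < M τ := by
    by_contra h'
    push_neg at h'
    exact absurd (key (M τ) (hMnonneg τ hτ) h' (hineq τ hτ)) (not_le.mpr h)
  have hsub : Set.Icc (0:ℝ) τ ⊆ Set.Icc 0 T := Set.Icc_subset_Icc le_rfl hτ.2
  obtain ⟨t, ht, hMt⟩ := intermediate_value_Icc hτ.1 (hMcont.mono hsub)
    ⟨le_of_lt hM0, le_of_lt hMτc⟩
  have htT : t ∈ Set.Icc (0:ℝ) T := hsub ht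
  have := key (M t) (hMnonneg t htT) (le_of_eq hMt) (hineq t htT)
  rw [hMt] at this
  linarith
end
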